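/- Let X be a spherical 2-design of size n in √m S^{m-1} which is an s-distance set of degree S = s, with normalized Gram matrix G, projection matrices {F_i}_{i=0}^s, and predegree polynomials {q_i}. If (1/n)q_i((nG)^∘) = F_i for all i ∈ {0,…,s}, then the relations R_α = {(x,y) : x·y = α} for α ∈ A'(X) form a symmetric association scheme on X which is Q-polynomial with respect to the ordering of idempotents {F_i}_{i=0}^s. -/

import Mathlib

open scoped InnerProductSpace Classical

noncomputable section

variable {V : Type*} [NormedAddCommGroup V] [InnerProductSpace ℝ V]

/-- `X` lies on the sphere of squared radius `m` (radius `√m`). -/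
def onSphere (m : ℝ) (X : Finset V) : Prop := ∀ x ∈ X, ⟪x, x⟫_ℝ = m

/-- The normalized Gram matrix `G` of `X`. -/
def gram (X : Finset V) : Matrix X X ℝ :=
  Matrix.of fun x y => (1 / (X.card : ℝ)) * ⟪(x : V), (y : V)⟫_ℝ

/-- The two conditions characterizing spherical 2-designs: `GJ = 0` and `G² = G`. -/
def IsTwoDesign (X : Finset V) : Prop :=
  (∀ x ∈ X, ∑ y ∈ X, ⟪x, y⟫_ℝ = 0) ∧
  (∀ x ∈ X, ∀ y ∈ X, (1 / (X.card : ℝ)) * ∑ z ∈ X, ⟪x, z⟫_ℝ * ⟪z, y⟫_ℝ = ⟪x, y⟫_ℝ)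

/-- `Pol_k(X)`: span of the zonal polynomials of degree at most `k`. -/
def Pol (X : Finset V) (k : ℕ) : Submodule ℝ (X → ℝ) :=
  Submodule.span ℝ {f | ∃ a ∈ X, ∃ p : Polynomial ℝ,
    p.natDegree ≤ k ∧ f = fun x => p.eval ⟪a, x.1⟫_ℝ}

/-- The inner product `(f,g) = (1/n) ∑ f(x) g(x)` on `C(X)`. -/
def inn (X : Finset V) (f g : X → ℝ) : ℝ := (1 / (X.card : ℝ)) * ∑ x, f x * g x

def innL (X : Finset V) (f : X → ℝ) : (X → ℝ) →ₗ[ℝ] ℝ where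
  toFun g := inn X f g
  map_add' g h := by
    simp only [inn, Pi.add_apply, mul_add, Finset.sum_add_distrib]
  map_smul' c g := by
    simp only [inn, Pi.smul_apply, smul_eq_mul, RingHom.id_apply]
    rw [Finset.sum_congr rfl (fun x _ => by ring : ∀ x ∈ Finset.univ, f x * (c * g x) = c * (f x * g x)),
      ← Finset.mul_sum]
    ring

/-- The orthogonal complement of `W` with respect to `inn`. -/
def perp (X : Finset V) (W : Submodule ℝ (X → ℝ)) : Submodule ℝ (X → ℝ) :=
  ⨅ f ∈ W, LinearMap.ker (innL X f)

/-- The harmonic spaces `Harm_k(X)`. -/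
def Harm (X : Finset V) : ℕ → Submodule ℝ (X → ℝ)
  | 0 => Pol X 0
  | (k+1) => Pol X (k+1) ⊓ perp X (Pol X k)

/-- `F` is the matrix of the orthogonal projection of `C(X)` onto `W`
(with respect to the inner product `inn`). -/
def IsProjOnto (X : Finset V) (W : Submodule ℝ (X → ℝ)) (F : Matrix X X ℝ) : Prop :=
  (∀ f, F.mulVec f ∈ W) ∧ (∀ f ∈ W, F.mulVec f = f) ∧ (∀ f ∈ perp X W, F.mulVec f = 0)

/-- The degree `S` of `X`: the least `i` with `Pol_i(X) = C(X)`. -/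
def degS (X : Finset V) : ℕ := sInf {i | Pol X i = ⊤}

/-- `A(X)`, the set of inner products between distinct points of `X`. -/
def Aset (X : Finset V) : Finset ℝ :=
  ((X ×ˢ X).filter fun p => p.1 ≠ p.2).image fun p => ⟪p.1, p.2⟫_ℝ

/-- `A'(X) = A(X) ∪ {m}`. -/
def Aset' (m : ℝ) (X : Finset V) : Finset ℝ := insert m (Aset X)

/-- `κ_α`, the number of ordered pairs of points of `X` with inner product `α`. -/
def kappa (X : Finset V) (α : ℝ) : ℕ := ((X ×ˢ X).filter fun p => ⟪p.1, p.2⟫_ℝ = α).card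

/-- The inner product `⟨p,q⟩ = (1/n²) ∑_{α ∈ A'(X)} κ_α p(α) q(α)` on polynomials. -/
def pInn (m : ℝ) (X : Finset V) (p q : Polynomial ℝ) : ℝ :=
  (1 / (X.card : ℝ) ^ 2) * ∑ α ∈ Aset' m X, (kappa X α : ℝ) * (p.eval α * q.eval α)

/-- `q` is the family of predegree polynomials of `X`. -/
def IsPredegree (m : ℝ) (X : Finset V) (s : ℕ) (q : ℕ → Polynomial ℝ) : Prop :=
  (∀ k ≤ s, (q k).natDegree = k ∧ q k ≠ 0) ∧
  (∀ k ≤ s, ∀ h ≤ s, pInn m X (q k) (q h) = if k = h then (q k).eval m else 0)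

/-- The relation matrix `A_α` of `X`. -/
def relMat (X : Finset V) (α : ℝ) : Matrix X X ℝ :=
  Matrix.of fun x y => if ⟪(x : V), (y : V)⟫_ℝ = α then 1 else 0

/-- `X` carries the structure of a `Q`-polynomial association scheme with respect to
the idempotents `F_0, …, F_s` (whose relations are given by the inner products). -/
def CarriesQPolyScheme (m : ℝ) (X : Finset V) (s : ℕ) (F : ℕ → Matrix X X ℝ) : Prop :=
  (∀ α ∈ Aset' m X, ∀ β ∈ Aset' m X, relMat X α * relMat X β ∈
      Submodule.span ℝ (relMat X '' (Aset' m X : Set ℝ))) ∧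
  (∀ i ≤ s, F i ∈ Submodule.span ℝ (relMat X '' (Aset' m X : Set ℝ))) ∧
  (∀ i ≤ s, ∀ j ≤ s, F i * F j = if i = j then F i else 0) ∧
  (∑ i ∈ Finset.range (s + 1), F i = 1) ∧
  (F 0 = Matrix.of fun _ _ => 1 / (X.card : ℝ)) ∧
  (∀ i ≤ s, ∃ v : Polynomial ℝ, v.natDegree = i ∧
      F i = Matrix.of fun x y => (1 / (X.card : ℝ)) * v.eval ((X.card : ℝ) * F 1 x y))


namespace AuxQPoly

open Polynomial

lemma inn_symm (X : Finset V) (f g : X → ℝ) : inn X f g = inn X g f := by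
  unfold inn
  congr 1
  exact Finset.sum_congr rfl fun x _ => mul_comm _ _

lemma mem_perp {X : Finset V} {W : Submodule ℝ (X → ℝ)} {f : X → ℝ} :
    f ∈ perp X W ↔ ∀ g ∈ W, inn X g f = 0 := by
  unfold perp
  simp only [Submodule.mem_iInf, LinearMap.mem_ker]
  rfl

lemma inn_sum_right (X : Finset V) (f : X → ℝ) {ι : Type*} (t : Finset ι) (g : ι → (X → ℝ)) :
    inn X f (∑ i ∈ t, g i) = ∑ i ∈ t, inn X f (g i) :=
  map_sum (innL X f) g t

lemma inn_sub_right (X : Finset V) (f a b : X → ℝ) :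
    inn X f (a - b) = inn X f a - inn X f b :=
  map_sub (innL X f) a b

lemma inn_sum_left (X : Finset V) (f : X → ℝ) {ι : Type*} (t : Finset ι) (g : ι → (X → ℝ)) :
    inn X (∑ i ∈ t, g i) f = ∑ i ∈ t, inn X (g i) f := by
  rw [inn_symm, inn_sum_right]
  exact Finset.sum_congr rfl fun i _ => inn_symm X f (g i)

lemma inn_add_right (X : Finset V) (f a b : X → ℝ) :
    inn X f (a + b) = inn X f a + inn X f b :=
  map_add (innL X f) a b

lemma pol_mono (X : Finset V) {k l : ℕ} (hkl : k ≤ l) : Pol X k ≤ Pol X l :=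
  Submodule.span_mono fun f ⟨a, ha, p, hp, hf⟩ => ⟨a, ha, p, hp.trans hkl, hf⟩

lemma harm_le_pol (X : Finset V) : ∀ k, Harm X k ≤ Pol X k
  | 0 => le_rfl
  | (_+1) => inf_le_left

lemma harm_succ (X : Finset V) (k : ℕ) :
    Harm X (k+1) = Pol X (k+1) ⊓ perp X (Pol X k) := rfl

lemma perp_anti (X : Finset V) {W W' : Submodule ℝ (X → ℝ)} (h : W ≤ W') :
    perp X W' ≤ perp X W := fun f hf =>
  mem_perp.2 fun g hg => mem_perp.1 hf g (h hg)

lemma pol_le_perp_harm (X : Finset V) (k : ℕ) :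
    Pol X k ≤ perp X (Harm X (k+1)) := fun p hp =>
  mem_perp.2 fun g hg => by
    rw [harm_succ] at hg
    rw [inn_symm]
    exact mem_perp.1 (Submodule.mem_inf.1 hg).2 p hp

lemma exists_decomp (X : Finset V) (W : Submodule ℝ (X → ℝ)) (f : X → ℝ) :
    ∃ w ∈ W, ∃ p ∈ perp X W, f = w + p := by
  classical
  let e : (X → ℝ) ≃ₗ[ℝ] EuclideanSpace ℝ X := (WithLp.linearEquiv 2 ℝ (X → ℝ)).symm
  obtain ⟨u, hu, v, hv, huv⟩ :=
    (W.map e.toLinearMap).exists_add_mem_mem_orthogonal (e f)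
  refine ⟨e.symm u, ?_, e.symm v, ?_, ?_⟩
  · obtain ⟨w, hw, rfl⟩ := hu
    simpa using hw
  · refine mem_perp.2 fun g hg => ?_
    have h0 : (inner ℝ (e g) v : ℝ) = 0 :=
      (Submodule.mem_orthogonal _ v).1 hv (e g) ⟨g, hg, rfl⟩
    have h1 : ∑ x, g x * (e.symm v) x = 0 := by
      simp [PiLp.inner_apply, RCLike.inner_apply] at h0
      exact (Finset.sum_congr rfl fun x _ => mul_comm _ _).trans h0
    unfold inn
    rw [h1, mul_zero]
  · calc f = e.symm (e f) := (e.symm_apply_apply f).symm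
      _ = e.symm u + e.symm v := by rw [huv, map_add]

lemma proj_symm {X : Finset V} {W : Submodule ℝ (X → ℝ)} {F : Matrix X X ℝ}
    (hF : IsProjOnto X W F) (f g : X → ℝ) :
    inn X (F.mulVec f) g = inn X f (F.mulVec g) := by
  obtain ⟨wf, hwf, pf, hpf, rfl⟩ := exists_decomp X W f
  obtain ⟨wg, hwg, pg, hpg, rfl⟩ := exists_decomp X W g
  have h1 : F.mulVec (wf + pf) = wf := by
    rw [Matrix.mulVec_add, hF.2.1 wf hwf, hF.2.2 pf hpf, add_zero]
  have h2 : F.mulVec (wg + pg) = wg := by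
    rw [Matrix.mulVec_add, hF.2.1 wg hwg, hF.2.2 pg hpg, add_zero]
  rw [h1, h2, inn_add_right, inn_symm X (wf + pf) wg, inn_add_right,
    mem_perp.1 hpg wf hwf, mem_perp.1 hpf wg hwg, add_zero, add_zero, inn_symm]

lemma sum_mulVec {X : Finset V} (t : Finset ℕ) (A : ℕ → Matrix X X ℝ) (v : X → ℝ) :
    (∑ i ∈ t, A i).mulVec v = ∑ i ∈ t, (A i).mulVec v := by
  classical
  induction t using Finset.cons_induction with
  | empty => simp [Matrix.zero_mulVec]
  | cons i t hi ih => rw [Finset.sum_cons, Finset.sum_cons, Matrix.add_mulVec, ih]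

lemma mulVec_ext {X : Finset V} {A B : Matrix X X ℝ}
    (hAB : ∀ v, A.mulVec v = B.mulVec v) : A = B := by
  classical
  ext x y
  have h := congrFun (hAB (Pi.single y 1)) x
  simpa [Matrix.mulVec_single] using h

lemma not_mem_Aset {μ : ℝ} {X : Finset V} (hsph : onSphere μ X) : μ ∉ Aset X := by
  intro hm
  simp only [Aset, Finset.mem_image, Finset.mem_filter, Finset.mem_product] at hm
  obtain ⟨⟨x, y⟩, ⟨⟨hx, hy⟩, hxy⟩, hip⟩ := hm
  dsimp only at hip hxy
  apply hxy
  have h0 : ⟪x - y, x - y⟫_ℝ = 0 := by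
    have hyx : ⟪y, x⟫_ℝ = μ := by rw [real_inner_comm]; exact hip
    rw [inner_sub_sub_self, hsph x hx, hsph y hy, hip, hyx]
    ring
  exact sub_eq_zero.1 (inner_self_eq_zero.1 h0)

lemma inner_mem_Aset' {μ : ℝ} {X : Finset V} (hsph : onSphere μ X) (x y : X) :
    ⟪(x : V), (y : V)⟫_ℝ ∈ Aset' μ X := by
  by_cases hxy : x = y
  · subst hxy
    rw [hsph x x.2]
    exact Finset.mem_insert_self _ _
  · refine Finset.mem_insert_of_mem (Finset.mem_image.2 ⟨((x : V), (y : V)), ?_, rfl⟩)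
    exact Finset.mem_filter.2 ⟨Finset.mem_product.2 ⟨x.2, y.2⟩, fun hc => hxy (Subtype.ext hc)⟩

lemma exists_indicator (T : Finset ℝ) {t : ℝ} (ht : t ∈ T) :
    ∃ p : Polynomial ℝ, p.natDegree + 1 ≤ T.card ∧ p.eval t = 1 ∧
      ∀ u ∈ T, u ≠ t → p.eval u = 0 := by
  classical
  refine ⟨∏ b ∈ T.erase t, (C (t - b)⁻¹ * (X - C b)), ?_, ?_, ?_⟩
  · have h1 : (∏ b ∈ T.erase t, (C (t - b)⁻¹ * (X - C b))).natDegree ≤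
        ∑ b ∈ T.erase t, (C (t - b)⁻¹ * (X - C b)).natDegree :=
      Polynomial.natDegree_prod_le _ _
    have h2 : ∑ b ∈ T.erase t, (C (t - b)⁻¹ * (X - C b)).natDegree ≤ (T.erase t).card := by
      rw [Finset.card_eq_sum_ones]
      refine Finset.sum_le_sum fun b _ => ?_
      calc (C (t - b)⁻¹ * (X - C b)).natDegree
          ≤ (C (t - b)⁻¹).natDegree + (X - C b).natDegree := Polynomial.natDegree_mul_le
        _ ≤ 1 := by simp [Polynomial.natDegree_X_sub_C]
    have h3 : 1 ≤ T.card := Finset.card_pos.2 ⟨t, ht⟩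
    have h4 := Finset.card_erase_of_mem ht
    omega
  · rw [Polynomial.eval_prod]
    refine Finset.prod_eq_one fun b hb => ?_
    have hbt : t - b ≠ 0 := sub_ne_zero.2 fun hc => (Finset.ne_of_mem_erase hb) hc.symm
    simp only [Polynomial.eval_mul, Polynomial.eval_C, Polynomial.eval_sub, Polynomial.eval_X]
    field_simp
  · intro u hu hut
    rw [Polynomial.eval_prod]
    refine Finset.prod_eq_zero (Finset.mem_erase.2 ⟨hut, hu⟩) ?_
    simp

lemma spanq {s : ℕ} {q : ℕ → Polynomial ℝ}
    (hq1 : ∀ k ≤ s, (q k).natDegree = k ∧ q k ≠ 0) :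
    ∀ k, k ≤ s → ∀ p : Polynomial ℝ, p.natDegree ≤ k →
      p ∈ Submodule.span ℝ (Set.range fun i : Fin (s+1) => q i) := by
  intro k
  induction k with
  | zero =>
    intro hk p hp
    have hc : (q 0).coeff 0 ≠ 0 := by
      intro hc0
      apply (hq1 0 hk).2
      rw [Polynomial.eq_C_of_natDegree_le_zero (le_of_eq (hq1 0 hk).1), hc0, map_zero]
    have hp0 : p = (p.coeff 0 / (q 0).coeff 0) • q 0 := by
      rw [Polynomial.eq_C_of_natDegree_le_zero hp]
      nth_rewrite 2 [Polynomial.eq_C_of_natDegree_le_zero (le_of_eq (hq1 0 hk).1)]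
      rw [Polynomial.smul_C]
      congr 1
      simp [hc]
    rw [hp0]
    exact Submodule.smul_mem _ _
      (Submodule.subset_span ⟨(⟨0, Nat.succ_pos s⟩ : Fin (s+1)), rfl⟩)
  | succ k ih =>
    intro hk p hp
    have hk' : k ≤ s := Nat.le_of_succ_le hk
    have ha : (q (k+1)).coeff (k+1) ≠ 0 := by
      have h1 := Polynomial.leadingCoeff_ne_zero.2 (hq1 (k+1) hk).2
      rwa [Polynomial.leadingCoeff, (hq1 (k+1) hk).1] at h1
    set r := p - (p.coeff (k+1) / (q (k+1)).coeff (k+1)) • q (k+1) with hr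
    have hrd : r.natDegree ≤ k := by
      rw [Polynomial.natDegree_le_iff_coeff_eq_zero]
      intro N hN
      rcases Nat.lt_or_ge (k+1) N with hN2 | hN2
      · have e1 : p.coeff N = 0 := Polynomial.coeff_eq_zero_of_natDegree_lt (lt_of_le_of_lt hp hN2)
        have e2 : (q (k+1)).coeff N = 0 :=
          Polynomial.coeff_eq_zero_of_natDegree_lt (by rw [(hq1 (k+1) hk).1]; exact hN2)
        simp [hr, e1, e2]
      · have hNe : N = k + 1 := le_antisymm hN2 hN
        subst hNe
        simp only [hr, Polynomial.coeff_sub, Polynomial.coeff_smul, smul_eq_mul]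
        field_simp
        ring
    have hmem := ih hk' r hrd
    have hped : p = r + (p.coeff (k+1) / (q (k+1)).coeff (k+1)) • q (k+1) := by
      rw [hr]; ring
    rw [hped]
    refine Submodule.add_mem _ hmem (Submodule.smul_mem _ _ ?_)
    exact Submodule.subset_span ⟨(⟨k+1, by omega⟩ : Fin (s+1)), rfl⟩

lemma pol_top {μ : ℝ} {X : Finset V} (hsph : onSphere μ X) (hm : μ ∉ Aset X) :
    Pol X ((Aset X).card) = ⊤ := by
  classical
  rw [eq_top_iff]
  intro f _
  have hone : ∀ a : {x // x ∈ X}, (fun j : {x // x ∈ X} => if a = j then (1:ℝ) else 0) ∈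
      Pol X ((Aset X).card) := by
    intro a
    obtain ⟨p, hpd, hpt, hpz⟩ := exists_indicator (Aset' μ X) (Finset.mem_insert_self μ _)
    have hcard : (Aset' μ X).card = (Aset X).card + 1 := Finset.card_insert_of_notMem hm
    refine Submodule.subset_span ⟨(a : V), a.2, p, by omega, ?_⟩
    funext x
    by_cases hax : a = x
    · subst hax
      rw [if_pos rfl, hsph (a : V) a.2, hpt]
    · rw [if_neg hax]
      have hmem : ⟪(a : V), (x : V)⟫_ℝ ∈ Aset X := by
        refine Finset.mem_image.2 ⟨((a : V), (x : V)), ?_, rfl⟩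
        exact Finset.mem_filter.2 ⟨Finset.mem_product.2 ⟨a.2, x.2⟩,
          fun hc => hax (Subtype.ext hc)⟩
      exact (hpz _ (Finset.mem_insert_of_mem hmem) (fun hc => hm (hc ▸ hmem))).symm
  rw [pi_eq_sum_univ f]
  exact Submodule.sum_mem _ fun a _ => Submodule.smul_mem _ _ (hone a)

lemma sum_proj (X : Finset V) (F : ℕ → Matrix X X ℝ)
    (hF : ∀ i, IsProjOnto X (Harm X i) (F i)) :
    ∀ k, ∀ f ∈ Pol X k, (∑ i ∈ Finset.range (k+1), F i).mulVec f = f := by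
  intro k
  induction k with
  | zero =>
    intro f hf
    rw [Finset.sum_range_one]
    exact (hF 0).2.1 f hf
  | succ k ih =>
    intro f hf
    set Sf := (∑ i ∈ Finset.range (k+1), F i).mulVec f with hSf
    have hsumPol : Sf ∈ Pol X (k+1) := by
      rw [hSf, sum_mulVec]
      refine Submodule.sum_mem _ fun i hi => ?_
      have hik : i ≤ k := Nat.lt_succ_iff.1 (Finset.mem_range.1 hi)
      exact pol_mono X (hik.trans (Nat.le_succ k)) (harm_le_pol X i ((hF i).1 f))
    have hg : f - Sf ∈ Harm X (k+1) := by
      rw [harm_succ]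
      refine Submodule.mem_inf.2 ⟨Submodule.sub_mem _ hf hsumPol, ?_⟩
      refine mem_perp.2 fun p hp => ?_
      have e1 : inn X p Sf = inn X ((∑ i ∈ Finset.range (k+1), F i).mulVec p) f := by
        rw [hSf, sum_mulVec, sum_mulVec, inn_sum_right, inn_sum_left]
        exact Finset.sum_congr rfl fun i _ => (proj_symm (hF i) p f).symm
      rw [ih p hp] at e1
      rw [inn_sub_right, e1, sub_self]
    have hFsum : (F (k+1)).mulVec Sf = 0 := by
      rw [hSf, sum_mulVec]
      have hmap := map_sum ((F (k+1)).mulVecLin) (fun i => (F i).mulVec f) (Finset.range (k+1))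
      simp only [Matrix.mulVecLin_apply] at hmap
      rw [hmap]
      refine Finset.sum_eq_zero fun i hi => ?_
      have hik : i ≤ k := Nat.lt_succ_iff.1 (Finset.mem_range.1 hi)
      exact (hF (k+1)).2.2 _
        (pol_le_perp_harm X k (pol_mono X hik (harm_le_pol X i ((hF i).1 f))))
    have hfk1 : (F (k+1)).mulVec f = f - Sf := by
      have hdecomp : f = (f - Sf) + Sf := by abel
      calc (F (k+1)).mulVec f = (F (k+1)).mulVec ((f - Sf) + Sf) := by rw [← hdecomp]
        _ = (F (k+1)).mulVec (f - Sf) + (F (k+1)).mulVec Sf := Matrix.mulVec_add _ _ _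
        _ = (f - Sf) + 0 := by rw [(hF (k+1)).2.1 _ hg, hFsum]
        _ = f - Sf := add_zero _
    rw [Finset.sum_range_succ, Matrix.add_mulVec, ← hSf, hfk1]
    abel

lemma proj_orth (X : Finset V) (F : ℕ → Matrix X X ℝ)
    (hF : ∀ i, IsProjOnto X (Harm X i) (F i)) (i j : ℕ) :
    F i * F j = if i = j then F i else 0 := by
  apply mulVec_ext
  intro v
  rw [← Matrix.mulVec_mulVec]
  rcases lt_trichotomy i j with hij | rfl | hij
  · obtain ⟨t, rfl⟩ : ∃ t, j = t + 1 := ⟨j - 1, by omega⟩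
    have h0 : (F i).mulVec ((F (t+1)).mulVec v) = 0 := by
      apply (hF i).2.2
      apply perp_anti X ((harm_le_pol X i).trans (pol_mono X (by omega : i ≤ t)))
      have hmem := (hF (t+1)).1 v
      rw [harm_succ] at hmem
      exact (Submodule.mem_inf.1 hmem).2
    rw [h0, if_neg hij.ne, Matrix.zero_mulVec]
  · rw [if_pos rfl]
    exact (hF i).2.1 _ ((hF i).1 v)
  · obtain ⟨t, rfl⟩ : ∃ t, i = t + 1 := ⟨i - 1, by omega⟩
    have h0 : (F (t+1)).mulVec ((F j).mulVec v) = 0 := by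
      apply (hF (t+1)).2.2
      exact pol_le_perp_harm X t (pol_mono X (by omega : j ≤ t) (harm_le_pol X j ((hF j).1 v)))
    rw [h0, if_neg hij.ne', Matrix.zero_mulVec]

end AuxQPoly

open AuxQPoly

theorem statement_9 {m : ℕ} (X : Finset (EuclideanSpace ℝ (Fin m))) (hne : X.Nonempty)
    (hsph : onSphere (m : ℝ) X) (hdes : IsTwoDesign X) (s : ℕ) (hs : (Aset X).card = s)
    (hdeg : degS X = s)
    (F : ℕ → Matrix X X ℝ) (hF : ∀ i, IsProjOnto X (Harm X i) (F i))
    (q : ℕ → Polynomial ℝ) (hq : IsPredegree (m : ℝ) X s q)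
    (h : ∀ i ≤ s, F i =
        Matrix.of fun x y => (1 / (X.card : ℝ)) * (q i).eval ⟪x.1, y.1⟫_ℝ) :
    CarriesQPolyScheme (m : ℝ) X s F := by
  classical
  have hn : (X.card : ℝ) ≠ 0 := Nat.cast_ne_zero.2 hne.card_pos.ne'
  have hm : (m : ℝ) ∉ Aset X := not_mem_Aset hsph
  have hAcard : (Aset' (m : ℝ) X).card = s + 1 := by
    rw [Aset', Finset.card_insert_of_notMem hm, hs]
  obtain ⟨a0, ha0⟩ := hne
  -- `F 0 = J/n`
  have hone : (fun _ : {x // x ∈ X} => (1:ℝ)) ∈ Pol X 0 :=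
    Submodule.subset_span ⟨a0, ha0, Polynomial.C 1, by simp, by funext x; simp⟩
  have happ : (F 0).mulVec (fun _ => (1:ℝ)) = fun _ => (1:ℝ) := (hF 0).2.1 _ hone
  have hq0d : (q 0).natDegree ≤ 0 := le_of_eq (hq.1 0 (Nat.zero_le s)).1
  have hc1 : (q 0).coeff 0 = 1 := by
    have hx0 := congrFun happ ⟨a0, ha0⟩
    rw [h 0 (Nat.zero_le s)] at hx0
    rw [Polynomial.eq_C_of_natDegree_le_zero hq0d] at hx0
    simp only [Matrix.mulVec, dotProduct, Matrix.of_apply, Polynomial.eval_C, mul_one,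
      Finset.sum_const, Fintype.card_coe, nsmul_eq_mul] at hx0
    field_simp at hx0
    rw [Finset.card_univ, Fintype.card_coe] at hx0
    exact mul_left_cancel₀ hn (hx0.trans (mul_one _).symm)
  have hF0 : F 0 = Matrix.of fun _ _ : {x // x ∈ X} => 1 / (X.card : ℝ) := by
    rw [h 0 (Nat.zero_le s)]
    ext x y
    simp only [Matrix.of_apply]
    rw [Polynomial.eq_C_of_natDegree_le_zero hq0d, Polynomial.eval_C, hc1, mul_one]
  -- each `F i` lies in the span of the relation matrices
  have hFM : ∀ i, i ≤ s →
      F i ∈ Submodule.span ℝ (relMat X '' ((Aset' (m:ℝ) X : Finset ℝ) : Set ℝ)) := by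
    intro i hi
    have hrepr : F i = ∑ α ∈ Aset' (m:ℝ) X,
        ((1 / (X.card : ℝ)) * (q i).eval α) • relMat X α := by
      ext x y
      rw [h i hi]
      simp only [Matrix.sum_apply, Matrix.smul_apply, relMat, Matrix.of_apply, smul_eq_mul,
        mul_ite, mul_one, mul_zero]
      rw [Finset.sum_ite_eq, if_pos (inner_mem_Aset' hsph x y)]
    rw [hrepr]
    exact Submodule.sum_mem _ fun α hα => Submodule.smul_mem _ _
      (Submodule.subset_span ⟨α, Finset.mem_coe.2 hα, rfl⟩)
  -- each relation matrix lies in the span of the `F i`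
  set SF := Submodule.span ℝ (Set.range fun i : Fin (s+1) => F (i : ℕ)) with hSFdef
  have hAS : ∀ α ∈ Aset' (m:ℝ) X, relMat X α ∈ SF := by
    intro α hα
    obtain ⟨p, hpd, hpt, hpz⟩ := exists_indicator (Aset' (m:ℝ) X) hα
    have hps : p.natDegree ≤ s := by omega
    obtain ⟨c, hcp⟩ := (Submodule.mem_span_range_iff_exists_fun ℝ).1 (spanq hq.1 s le_rfl p hps)
    have hrel : relMat X α = ∑ i : Fin (s+1), (c i * (X.card : ℝ)) • F (i : ℕ) := by
      ext x y
      have hrhs : ∑ i : Fin (s+1), c i * (X.card:ℝ) * F (i:ℕ) x y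
          = p.eval ⟪(x : EuclideanSpace ℝ (Fin m)), (y : EuclideanSpace ℝ (Fin m))⟫_ℝ := by
        rw [← hcp, Polynomial.eval_finset_sum]
        refine Finset.sum_congr rfl fun i _ => ?_
        rw [h i (Nat.lt_succ_iff.1 i.2)]
        simp only [Matrix.of_apply, Polynomial.eval_smul, smul_eq_mul]
        field_simp
      simp only [Matrix.sum_apply, Matrix.smul_apply, smul_eq_mul]
      rw [hrhs]
      simp only [relMat, Matrix.of_apply]
      by_cases hip : ⟪(x : EuclideanSpace ℝ (Fin m)), (y : EuclideanSpace ℝ (Fin m))⟫_ℝ = α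
      · rw [if_pos hip, hip]
        exact hpt.symm
      · rw [if_neg hip]
        exact (hpz _ (inner_mem_Aset' hsph x y) hip).symm
    rw [hrel]
    exact Submodule.sum_mem _ fun i _ => Submodule.smul_mem _ _
      (Submodule.subset_span ⟨i, rfl⟩)
  have hgen : ∀ i j : Fin (s+1), F (i:ℕ) * F (j:ℕ) ∈ SF := by
    intro i j
    rw [proj_orth X F hF i j]
    split_ifs
    · exact Submodule.subset_span ⟨i, rfl⟩
    · exact Submodule.zero_mem _
  have hmulSF : ∀ P ∈ SF, ∀ Q ∈ SF, P * Q ∈ SF := by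
    intro P hP
    induction hP using Submodule.span_induction with
    | mem x hx =>
      obtain ⟨i, rfl⟩ := hx
      intro Q hQ
      induction hQ using Submodule.span_induction with
      | mem y hy => obtain ⟨j, rfl⟩ := hy; exact hgen i j
      | zero => rw [mul_zero]; exact Submodule.zero_mem _
      | add y z _ _ hy' hz' => rw [mul_add]; exact Submodule.add_mem _ hy' hz'
      | smul c y _ hy' => rw [mul_smul_comm]; exact Submodule.smul_mem _ _ hy'
    | zero => intro Q hQ; rw [zero_mul]; exact Submodule.zero_mem _
    | add y z _ _ hy' hz' =>
      intro Q hQ; rw [add_mul]; exact Submodule.add_mem _ (hy' Q hQ) (hz' Q hQ)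
    | smul c y _ hy' =>
      intro Q hQ; rw [smul_mul_assoc]; exact Submodule.smul_mem _ _ (hy' Q hQ)
  have hSFle : SF ≤ Submodule.span ℝ (relMat X '' ((Aset' (m:ℝ) X : Finset ℝ) : Set ℝ)) := by
    rw [hSFdef]
    refine Submodule.span_le.2 ?_
    rintro _ ⟨i, rfl⟩
    exact hFM (i : ℕ) (Nat.lt_succ_iff.1 i.2)
  have hPolTop : Pol X s = ⊤ := by rw [← hs]; exact pol_top hsph hm
  refine ⟨?_, ?_, ?_, ?_, hF0, ?_⟩
  · intro α hα β hβ
    exact hSFle (hmulSF _ (hAS α hα) _ (hAS β hβ))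
  · exact hFM
  · intro i _ j _
    exact proj_orth X F hF i j
  · apply mulVec_ext
    intro v
    exact (sum_proj X F hF s v (hPolTop ▸ Submodule.mem_top)).trans (by ext x; simp [Matrix.mulVec, dotProduct, Matrix.one_apply])
  · intro i hi
    rcases Nat.eq_zero_or_pos i with rfl | hipos
    · refine ⟨Polynomial.C 1, Polynomial.natDegree_C 1, ?_⟩
      rw [hF0]
      ext x y
      simp
    · have hs1 : 1 ≤ s := hipos.trans_le hi
      have hq1d : (q 1).natDegree = 1 := (hq.1 1 hs1).1
      have haz : (q 1).coeff 1 ≠ 0 := by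
        have h1 := Polynomial.leadingCoeff_ne_zero.2 (hq.1 1 hs1).2
        rwa [Polynomial.leadingCoeff, hq1d] at h1
      set a := (q 1).coeff 1 with hadef
      set b := (q 1).coeff 0 with hbdef
      set l := Polynomial.C a⁻¹ * Polynomial.X + Polynomial.C (-b/a) with hl
      have hld : l.natDegree = 1 := Polynomial.natDegree_linear (inv_ne_zero haz)
      refine ⟨(q i).comp l, ?_, ?_⟩
      · rw [Polynomial.natDegree_comp, hld, (hq.1 i hi).1, mul_one]
      · ext x y
        have hFi : F i x y = (1/(X.card:ℝ)) *
            (q i).eval ⟪(x : EuclideanSpace ℝ (Fin m)), (y : EuclideanSpace ℝ (Fin m))⟫_ℝ := by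
          rw [h i hi]; rfl
        have hF1 : (X.card:ℝ) * F 1 x y =
            (q 1).eval ⟪(x : EuclideanSpace ℝ (Fin m)), (y : EuclideanSpace ℝ (Fin m))⟫_ℝ := by
          rw [h 1 hs1]
          simp only [Matrix.of_apply]
          field_simp
        have hq1e : (q 1).eval ⟪(x : EuclideanSpace ℝ (Fin m)),
            (y : EuclideanSpace ℝ (Fin m))⟫_ℝ =
            a * ⟪(x : EuclideanSpace ℝ (Fin m)), (y : EuclideanSpace ℝ (Fin m))⟫_ℝ + b := by
          nth_rewrite 1 [Polynomial.eq_X_add_C_of_natDegree_le_one hq1d.le]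
          simp
          rfl
        have hleval : Polynomial.eval
            (a * ⟪(x : EuclideanSpace ℝ (Fin m)), (y : EuclideanSpace ℝ (Fin m))⟫_ℝ + b) l =
            ⟪(x : EuclideanSpace ℝ (Fin m)), (y : EuclideanSpace ℝ (Fin m))⟫_ℝ := by
          rw [hl]
          simp only [Polynomial.eval_add, Polynomial.eval_mul, Polynomial.eval_C,
            Polynomial.eval_X]
          field_simp
          ring
        rw [hFi]
        show _ = (1/(X.card:ℝ)) * Polynomial.eval ((X.card:ℝ) * F 1 x y) ((q i).comp l)
        rw [Polynomial.eval_comp, hF1, hq1e, hleval]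

end
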